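/- Consider a weakly reversible generalized chemical reaction network (G weakly reversible, Y, Ỹ ∈ ℝ^{n×V}), and let x* ∈ ℝ^n_+. Then there exist edge labels k ∈ ℝ^E_+ such that A_k (x*)^Ỹ = 0, i.e., x* ∈ Z_k. -/
import Mathlib


open Matrix Polynomial Filter Topology

noncomputable section

/-- `D ∈ 𝒟₊`: a diagonal matrix with positive diagonal entries. -/
def IsPosDiag {n : ℕ} (D : Matrix (Fin n) (Fin n) ℝ) : Prop :=
  ∃ d : Fin n → ℝ, (∀ i, 0 < d i) ∧ D = Matrix.diagonal d

/-- A real square matrix is stable if every root in `ℂ` of its characteristic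
polynomial has negative real part. -/
def IsStableMat {n : ℕ} (A : Matrix (Fin n) (Fin n) ℝ) : Prop :=
  ∀ z : ℂ, (A.charpoly.map (algebraMap ℝ ℂ)).IsRoot z → z.re < 0

/-- A real square matrix is semistable if every root in `ℂ` of its characteristic
polynomial has non-positive real part. -/
def IsSemistableMat {n : ℕ} (A : Matrix (Fin n) (Fin n) ℝ) : Prop :=
  ∀ z : ℂ, (A.charpoly.map (algebraMap ℝ ℂ)).IsRoot z → z.re ≤ 0

/-- The restriction `A|_S : S → S` of a matrix whose range is contained in `S`. -/
def restrictedMap {n : ℕ} (A : Matrix (Fin n) (Fin n) ℝ) (S : Submodule ℝ (Fin n → ℝ))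
    (h : ∀ v, A.mulVec v ∈ S) : S →ₗ[ℝ] S :=
  A.mulVecLin.restrict (p := S) (q := S) (fun x _ => by simpa using h x)

/-- `A` is stable on `S`: `range A ⊆ S` and every eigenvalue over `ℂ` (root of the
characteristic polynomial) of `A|_S : S → S` has negative real part. -/
def IsStableOn {n : ℕ} (A : Matrix (Fin n) (Fin n) ℝ) (S : Submodule ℝ (Fin n → ℝ)) : Prop :=
  ∃ h : ∀ v, A.mulVec v ∈ S,
    ∀ z : ℂ, (((restrictedMap A S h).charpoly).map (algebraMap ℝ ℂ)).IsRoot z → z.re < 0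

/-- `A` is semistable on `S`: `range A ⊆ S` and every eigenvalue over `ℂ` of
`A|_S : S → S` has non-positive real part. -/
def IsSemistableOn {n : ℕ} (A : Matrix (Fin n) (Fin n) ℝ) (S : Submodule ℝ (Fin n → ℝ)) : Prop :=
  ∃ h : ∀ v, A.mulVec v ∈ S,
    ∀ z : ℂ, (((restrictedMap A S h).charpoly).map (algebraMap ℝ ℂ)).IsRoot z → z.re ≤ 0

/-- `M < 0` on `S`. -/
def NegDefOn {n : ℕ} (M : Matrix (Fin n) (Fin n) ℝ) (S : Submodule ℝ (Fin n → ℝ)) : Prop :=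
  ∀ x ∈ S, x ≠ 0 → x ⬝ᵥ M.mulVec x < 0

/-- `M ≤ 0` on `S`. -/
def NegSemidefOn {n : ℕ} (M : Matrix (Fin n) (Fin n) ℝ) (S : Submodule ℝ (Fin n → ℝ)) : Prop :=
  ∀ x ∈ S, x ⬝ᵥ M.mulVec x ≤ 0

/-- `M > 0` on `S`. -/
def PosDefOn {n : ℕ} (M : Matrix (Fin n) (Fin n) ℝ) (S : Submodule ℝ (Fin n → ℝ)) : Prop :=
  ∀ x ∈ S, x ≠ 0 → 0 < x ⬝ᵥ M.mulVec x

/-- The Laplacian matrix `A_k` of the labeled digraph `(V,E)` with edge labels `k`: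
`(A_k)_{i',i} = k_{i→i'}` if `(i→i') ∈ E`, `(A_k)_{i,i} = -∑_{(i→i')∈E} k_{i→i'}`,
and `0` otherwise (the graph has no self-loops). -/
def laplacian {m : ℕ} (E : Finset (Fin m × Fin m)) (k : Fin m × Fin m → ℝ) :
    Matrix (Fin m) (Fin m) ℝ :=
  fun i' i => (if (i, i') ∈ E then k (i, i') else 0)
    - (if i' = i then ∑ e ∈ E.filter (fun e => e.1 = i), k e else 0)

/-- The incidence matrix `I_E ∈ ℝ^{V×E}`, with column `e_{i'} - e_i` for each edge `(i→i')`. -/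
def incidence {m : ℕ} (E : Finset (Fin m × Fin m)) :
    Matrix (Fin m) {e : Fin m × Fin m // e ∈ E} ℝ :=
  fun i e => (if (e : Fin m × Fin m).2 = i then (1 : ℝ) else 0)
    - (if (e : Fin m × Fin m).1 = i then 1 else 0)

/-- `x^Ỹ ∈ ℝ^V`, defined by `(x^Ỹ)_j = ∏_i x_i ^ (Ỹ)_{ij}` (real exponents). -/
def powVec {n m : ℕ} (x : Fin n → ℝ) (Yt : Matrix (Fin n) (Fin m) ℝ) : Fin m → ℝ :=
  fun j => ∏ i, (x i) ^ (Yt i j)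

/-- The digraph `(V,E)` is weakly reversible: every connected component is strongly
connected, i.e. whenever `a` and `b` are connected by an undirected path, there is a
directed path from `a` to `b`. -/
def WeaklyReversible {m : ℕ} (E : Finset (Fin m × Fin m)) : Prop :=
  ∀ a b : Fin m,
    Relation.ReflTransGen (fun u v => (u, v) ∈ E ∨ (v, u) ∈ E) a b →
    Relation.ReflTransGen (fun u v => (u, v) ∈ E) a b

/-- The stoichiometric subspace `S = range (Y I_E)`. -/
def stoichSubspace {n m : ℕ} (Y : Matrix (Fin n) (Fin m) ℝ) (E : Finset (Fin m × Fin m)) :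
    Submodule ℝ (Fin n → ℝ) :=
  LinearMap.range (Y * incidence E).mulVecLin

/-- The Jacobian matrix `J(x) = Y A_k diag(x^Ỹ) Ỹᵀ diag(x⁻¹)` of `x ↦ Y A_k x^Ỹ`. -/
def jacobianMat {n m : ℕ} (E : Finset (Fin m × Fin m)) (k : Fin m × Fin m → ℝ)
    (Y Yt : Matrix (Fin n) (Fin m) ℝ) (x : Fin n → ℝ) : Matrix (Fin n) (Fin n) ℝ :=
  Y * laplacian E k * Matrix.diagonal (powVec x Yt) * Ytᵀ * Matrix.diagonal (fun i => (x i)⁻¹)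

/-- `C` is (the edge set of) a cycle: `{i_1→i_2, …, i_{r-1}→i_r, i_r→i_1}` with
pairwise distinct vertices `i_1, …, i_r` (and `r ≥ 2`). -/
def IsCycleEdges {m : ℕ} (C : Finset (Fin m × Fin m)) : Prop :=
  ∃ (r : ℕ) (f : Fin (r + 2) → Fin m), Function.Injective f ∧
    C = Finset.image (fun j => (f j, f (j + 1))) Finset.univ

/-- The edge set of the directed `m`-cycle `1 → 2 → ⋯ → m → 1`. -/
def cycleEdges (m : ℕ) [NeZero m] : Finset (Fin m × Fin m) :=
  Finset.image (fun i : Fin m => (i, i + 1)) Finset.univ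

end
/-- for a weakly reversible network, every positive vector is a
complex-balanced equilibrium for some rate constants. -/
theorem stmt7 {n m : ℕ} (E : Finset (Fin m × Fin m)) (hE : ∀ e ∈ E, e.1 ≠ e.2)
    (hwr : WeaklyReversible E) (Yt : Matrix (Fin n) (Fin m) ℝ)
    (x : Fin n → ℝ) (hx : ∀ i, 0 < x i) :
    ∃ k : Fin m × Fin m → ℝ, (∀ e ∈ E, 0 < k e) ∧
      (laplacian E k).mulVec (powVec x Yt) = 0 := by
  classical
  set p : Fin m → ℝ := powVec x Yt with hp
  have hppos : ∀ j, 0 < p j := by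
    intro j
    exact Finset.prod_pos fun i _ => Real.rpow_pos_of_pos (hx i) _
  -- for each edge (a,b) ∈ E there is a directed path b → a
  have hconn : ∀ e ∈ E, Relation.ReflTransGen (fun u v => (u, v) ∈ E) e.2 e.1 := by
    intro e he
    exact hwr e.2 e.1 (Relation.ReflTransGen.single (Or.inr (by simpa using he)))
  -- path flows
  have pathflow : ∀ (a b : Fin m), Relation.ReflTransGen (fun u v => (u, v) ∈ E) a b →
      ∃ c : Fin m × Fin m → ℝ, (∀ e, 0 ≤ c e) ∧
        ∀ v, (∑ e ∈ E, c e * ((if e.2 = v then (1 : ℝ) else 0) - (if e.1 = v then 1 else 0)))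
           = (if b = v then 1 else 0) - (if a = v then 1 else 0) := by
    intro a b h
    induction h with
    | refl => exact ⟨0, by simp, by simp⟩
    | @tail q r h1 h2 ih =>
        obtain ⟨c, hc0, hcnet⟩ := ih
        refine ⟨fun e => c e + (if e = (q, r) then 1 else 0), ?_, ?_⟩
        · intro e
          have := hc0 e
          positivity
        · intro v
          have hsum : (∑ e ∈ E, (if e = (q, r) then (1 : ℝ) else 0) *
              ((if e.2 = v then (1 : ℝ) else 0) - (if e.1 = v then 1 else 0)))
              = ((if r = v then (1 : ℝ) else 0) - (if q = v then 1 else 0)) := by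
            rw [Finset.sum_eq_single (q, r)]
            · simp
            · intro e _ hne; simp [hne]
            · intro hne; exact absurd h2 hne
          calc (∑ e ∈ E, (c e + (if e = (q, r) then (1:ℝ) else 0)) *
                ((if e.2 = v then (1 : ℝ) else 0) - (if e.1 = v then 1 else 0)))
              = (∑ e ∈ E, c e * ((if e.2 = v then (1 : ℝ) else 0) - (if e.1 = v then 1 else 0)))
                + (∑ e ∈ E, (if e = (q, r) then (1 : ℝ) else 0) *
                  ((if e.2 = v then (1 : ℝ) else 0) - (if e.1 = v then 1 else 0))) := by
                rw [← Finset.sum_add_distrib]; congr 1; ext e; ring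
            _ = ((if q = v then (1:ℝ) else 0) - (if a = v then 1 else 0))
                + ((if r = v then (1:ℝ) else 0) - (if q = v then 1 else 0)) := by
                rw [hcnet v, hsum]
            _ = (if r = v then (1:ℝ) else 0) - (if a = v then 1 else 0) := by ring
  have H : ∀ e ∈ E, ∃ c : Fin m × Fin m → ℝ, (∀ e', 0 ≤ c e') ∧
      ∀ v, (∑ e' ∈ E, c e' * ((if e'.2 = v then (1 : ℝ) else 0) - (if e'.1 = v then 1 else 0)))
         = (if e.1 = v then 1 else 0) - (if e.2 = v then 1 else 0) :=
    fun e he => pathflow e.2 e.1 (hconn e he)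
  choose f hf0 hfnet using H
  -- total circulation
  set C : Fin m × Fin m → ℝ :=
    fun e' => ∑ e ∈ E.attach, ((if e' = (e : Fin m × Fin m) then (1 : ℝ) else 0)
      + f e e.2 e') with hC
  have hC0 : ∀ e, 0 ≤ C e := by
    intro e
    apply Finset.sum_nonneg
    intro e' _
    have := hf0 e' e'.2 e
    positivity
  have hCpos : ∀ e ∈ E, 0 < C e := by
    intro e he
    apply Finset.sum_pos' (fun e' _ => by have := hf0 e' e'.2 e; positivity)
    refine ⟨⟨e, he⟩, Finset.mem_attach _ _, ?_⟩
    show (0:ℝ) < (if e = e then 1 else 0) + f e he e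
    have := hf0 e he e
    rw [if_pos rfl]
    linarith
  have hterm : ∀ e' : {x // x ∈ E}, ∀ v : Fin m,
      (∑ e ∈ E, ((if e = (e' : Fin m × Fin m) then (1:ℝ) else 0) + f e' e'.2 e) *
        ((if e.2 = v then (1 : ℝ) else 0) - (if e.1 = v then 1 else 0))) = 0 := by
    intro e' v
    have h1 : (∑ e ∈ E, (if e = (e' : Fin m × Fin m) then (1:ℝ) else 0) *
        ((if e.2 = v then (1 : ℝ) else 0) - (if e.1 = v then 1 else 0)))
        = ((if (e' : Fin m × Fin m).2 = v then (1:ℝ) else 0)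
          - (if (e' : Fin m × Fin m).1 = v then 1 else 0)) := by
      rw [Finset.sum_eq_single (e' : Fin m × Fin m)]
      · simp
      · intro e _ hne; simp [hne]
      · intro hne; exact absurd e'.2 hne
    calc (∑ e ∈ E, ((if e = (e' : Fin m × Fin m) then (1:ℝ) else 0) + f e' e'.2 e) *
          ((if e.2 = v then (1 : ℝ) else 0) - (if e.1 = v then 1 else 0)))
        = (∑ e ∈ E, (if e = (e' : Fin m × Fin m) then (1:ℝ) else 0) *
            ((if e.2 = v then (1 : ℝ) else 0) - (if e.1 = v then 1 else 0)))
          + (∑ e ∈ E, f e' e'.2 e *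
            ((if e.2 = v then (1 : ℝ) else 0) - (if e.1 = v then 1 else 0))) := by
          rw [← Finset.sum_add_distrib]; congr 1; ext e; ring
      _ = 0 := by rw [h1, hfnet e' e'.2 v]; ring
  have hCnet : ∀ v, (∑ e ∈ E, C e * ((if e.2 = v then (1 : ℝ) else 0)
      - (if e.1 = v then 1 else 0))) = 0 := by
    intro v
    calc (∑ e ∈ E, C e * ((if e.2 = v then (1 : ℝ) else 0) - (if e.1 = v then 1 else 0)))
        = ∑ e ∈ E, ∑ e' ∈ E.attach,
            (((if e = (e' : Fin m × Fin m) then (1:ℝ) else 0) + f e' e'.2 e) *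
              ((if e.2 = v then (1 : ℝ) else 0) - (if e.1 = v then 1 else 0))) := by
          refine Finset.sum_congr rfl fun e _ => ?_
          rw [hC, Finset.sum_mul]
      _ = ∑ e' ∈ E.attach, ∑ e ∈ E,
            (((if e = (e' : Fin m × Fin m) then (1:ℝ) else 0) + f e' e'.2 e) *
              ((if e.2 = v then (1 : ℝ) else 0) - (if e.1 = v then 1 else 0))) :=
          Finset.sum_comm
      _ = 0 := by
          rw [Finset.sum_congr rfl fun e' _ => hterm e' v]
          simp
  -- define rate constants
  refine ⟨fun e => C e / p e.1, fun e he => div_pos (hCpos e he) (hppos e.1), ?_⟩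
  funext v
  have hk : ∀ e : Fin m × Fin m, (C e / p e.1) * p e.1 = C e := by
    intro e; exact div_mul_cancel₀ (C e) (hppos e.1).ne'
  show (∑ i, laplacian E (fun e => C e / p e.1) v i * p i) = 0
  have hdiag : (∑ i, (if v = i then
      ∑ e ∈ E.filter (fun e => e.1 = i), C e / p e.1 else 0) * p i)
      = ∑ e ∈ E, (if e.1 = v then C e else 0) := by
    rw [Finset.sum_eq_single v]
    · rw [if_pos rfl, Finset.sum_filter, Finset.sum_mul]
      refine Finset.sum_congr rfl fun e _ => ?_
      by_cases h : e.1 = v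
      · rw [if_pos h, if_pos h, ← h, hk]
      · simp [h]
    · intro i _ hne; simp [Ne.symm hne]
    · intro h; exact absurd (Finset.mem_univ v) h
  have hoff : (∑ i, (if (i, v) ∈ E then C (i, v) / p (i, v).1 else 0) * p i)
      = ∑ e ∈ E, (if e.2 = v then C e else 0) := by
    have step1 : (∑ e ∈ E, (if e.2 = v then C e else 0))
        = ∑ e ∈ (Finset.univ : Finset (Fin m × Fin m)),
          (if e ∈ E then (if e.2 = v then C e else 0) else 0) := by
      rw [Finset.sum_ite_mem, Finset.univ_inter]
    rw [step1, Fintype.sum_prod_type]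
    refine Finset.sum_congr rfl fun i _ => ?_
    rw [Finset.sum_eq_single v]
    · by_cases h : (i, v) ∈ E
      · rw [if_pos h, if_pos h, if_pos rfl]
        exact hk (i, v)
      · simp [h]
    · intro j _ hne
      simp [hne]
    · intro h; exact absurd (Finset.mem_univ v) h
  have hlap : (∑ i, laplacian E (fun e => C e / p e.1) v i * p i)
      = (∑ i, (if (i, v) ∈ E then C (i, v) / p (i, v).1 else 0) * p i)
        - (∑ i, (if v = i then
          ∑ e ∈ E.filter (fun e => e.1 = i), C e / p e.1 else 0) * p i) := by
    rw [← Finset.sum_sub_distrib]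
    refine Finset.sum_congr rfl fun i _ => ?_
    simp only [laplacian]
    ring
  have hfin : (∑ e ∈ E, ((if e.2 = v then C e else 0) - (if e.1 = v then C e else 0)))
      = ∑ e ∈ E, C e * ((if e.2 = v then (1 : ℝ) else 0) - (if e.1 = v then 1 else 0)) := by
    refine Finset.sum_congr rfl fun e _ => ?_
    by_cases h1 : e.2 = v <;> by_cases h2 : e.1 = v <;> simp [h1, h2]
  rw [hlap, hoff, hdiag, ← Finset.sum_sub_distrib, hfin, hCnet v]
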